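/- Let β₁, β₂ ∈ (0,1) satisfy β₁ > 1/2 and β₂ < 2 − 1/β₁ (equivalently β₁(2−β₂) > 1). Then A₁ = [0,1] × {1} is a chaotic saddle; in particular the basin B(A₁) has two-dimensional Lebesgue measure zero, m₂(B(A₁)) = 0. -/

import Mathlib

open MeasureTheory Filter Set

noncomputable section

/-- The fiber map `g₁,β(y) = y + y(1-y)(y-β)`. -/
def g1 (β y : ℝ) : ℝ := y + y * (1 - y) * (y - β)

/-- The fiber map `g₂,β(y) = y - y(1-y)(y-β)`. -/
def g2 (β y : ℝ) : ℝ := y - y * (1 - y) * (y - β)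

/-- The doubling map on `[0,1]`. -/
def dbl (x : ℝ) : ℝ := if x ≤ 1/2 then 2*x else 2*x - 1

/-- The skew product `F(x,y) = (f(x), g₁,β₁(y))` for `x ≤ 1/2` and
`F(x,y) = (f(x), g₂,β₂(y))` for `x > 1/2`. -/
def Fsk (β1 β2 : ℝ) (p : ℝ × ℝ) : ℝ × ℝ :=
  if p.1 ≤ 1/2 then (dbl p.1, g1 β1 p.2) else (dbl p.1, g2 β2 p.2)

/-- The unit square `[0,1]²`. -/
def unitSq : Set (ℝ × ℝ) := Set.Icc (0:ℝ) 1 ×ˢ Set.Icc (0:ℝ) 1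

/-- The basin of points of `[0,1]²` whose second coordinate tends to `c` under iteration
of the skew product. -/
def basin (β1 β2 c : ℝ) : Set (ℝ × ℝ) :=
  {p | p ∈ unitSq ∧ Tendsto (fun n : ℕ => ((Fsk β1 β2)^[n] p).2) atTop (nhds c)}

/-! ### Auxiliary material -/

open scoped ENNReal

attribute [local instance] ZeroLEOneClass.factZeroLtOne

/-- The weight attached to a branch of the doubling map. -/
def rr (a b t : ℝ) : ℝ := if t ≤ 1/2 then a else b

/-- Doubling on the circle `ℝ/ℤ`. -/
def Tc : AddCircle (1:ℝ) → AddCircle (1:ℝ) := fun z => (2:ℕ) • z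

/-- The branch weight transported to the circle. -/
def rho (a b : ℝ) (z : AddCircle (1:ℝ)) : ℝ := rr a b ((AddCircle.equivIoc 1 0 z : ℝ))

/-- Points of the circle whose weighted orbit products tend to `0`. -/
def Etil (a b : ℝ) : Set (AddCircle (1:ℝ)) :=
  {z | Tendsto (fun n => ∏ k ∈ Finset.range n, rho a b (Tc^[k] z)) atTop (nhds 0)}

lemma measurable_rho (a b : ℝ) : Measurable (rho a b) := by
  have he : Measurable (fun z : AddCircle (1:ℝ) => ((AddCircle.equivIoc 1 0 z : ℝ))) :=
    measurable_subtype_coe.comp (AddCircle.measurableEquivIoc 1 0).measurable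
  exact Measurable.ite (he measurableSet_Iic) measurable_const measurable_const

lemma measurable_Tc : Measurable Tc := (continuous_nsmul 2).measurable

lemma measurableSet_Etil (a b : ℝ) : MeasurableSet (Etil a b) := by
  apply measurableSet_tendsto
  intro n
  exact Finset.measurable_prod _ (fun k _ => (measurable_rho a b).comp (measurable_Tc.iterate k))

lemma rr_pos {a b : ℝ} (ha : 0 < a) (hb : 0 < b) (t : ℝ) : 0 < rr a b t := by
  unfold rr; split <;> assumption

lemma rho_pos {a b : ℝ} (ha : 0 < a) (hb : 0 < b) (z : AddCircle (1:ℝ)) : 0 < rho a b z :=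
  rr_pos ha hb _

lemma equivIoc_coe {x : ℝ} (hx : x ∈ Ioc (0:ℝ) 1) :
    ((AddCircle.equivIoc 1 0 ((x : ℝ) : AddCircle (1:ℝ))) : ℝ) = x := by
  have hx' : x ∈ Ioc (0:ℝ) (0+1) := by simpa using hx
  simpa [AddCircle.liftIoc, Function.comp] using
    AddCircle.liftIoc_coe_apply (p := (1:ℝ)) (a := 0) (f := id) hx'

lemma rho_coe {a b x : ℝ} (hx : x ∈ Ioc (0:ℝ) 1) :
    rho a b ((x : ℝ) : AddCircle (1:ℝ)) = rr a b x := by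
  unfold rho; rw [equivIoc_coe hx]

lemma Q_succ (a b : ℝ) (z : AddCircle (1:ℝ)) (n : ℕ) :
    ∏ k ∈ Finset.range (n+1), rho a b (Tc^[k] z)
      = (∏ k ∈ Finset.range n, rho a b (Tc^[k] (Tc z))) * rho a b z := by
  rw [Finset.prod_range_succ']
  exact congrArg (· * rho a b z)
    (Finset.prod_congr rfl fun k _ => by rw [Function.iterate_succ_apply])

lemma Tc_preimage_Etil {a b : ℝ} (ha : 0 < a) (hb : 0 < b) :
    Tc ⁻¹' (Etil a b) = Etil a b := by
  ext z
  simp only [Etil, mem_preimage, mem_setOf_eq]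
  constructor
  · intro h
    have h2 : Tendsto (fun n => (∏ k ∈ Finset.range n, rho a b (Tc^[k] (Tc z))) * rho a b z)
        atTop (nhds (0 * rho a b z)) := h.mul_const _
    rw [zero_mul] at h2
    have h3 : Tendsto (fun n => ∏ k ∈ Finset.range (n+1), rho a b (Tc^[k] z)) atTop (nhds 0) := by
      simpa only [Q_succ] using h2
    exact (tendsto_add_atTop_iff_nat 1).mp h3
  · intro h
    have h3 : Tendsto (fun n => ∏ k ∈ Finset.range (n+1), rho a b (Tc^[k] z)) atTop (nhds 0) :=
      (tendsto_add_atTop_iff_nat 1).mpr h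
    have h4 : Tendsto (fun n => (∏ k ∈ Finset.range (n+1), rho a b (Tc^[k] z)) * (rho a b z)⁻¹)
        atTop (nhds (0 * (rho a b z)⁻¹)) := h3.mul_const _
    rw [zero_mul] at h4
    have h5 : ∀ n, (∏ k ∈ Finset.range (n+1), rho a b (Tc^[k] z)) * (rho a b z)⁻¹
        = ∏ k ∈ Finset.range n, rho a b (Tc^[k] (Tc z)) := by
      intro n
      rw [Q_succ, mul_assoc, mul_inv_cancel₀ (rho_pos ha hb z).ne', mul_one]
    simpa only [h5] using h4

lemma integral_log_rho {a b : ℝ} (ha : 0 < a) (hb : 0 < b) :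
    ∫ z : AddCircle (1:ℝ), Real.log (rho a b z) = (Real.log a + Real.log b)/2 := by
  have h1 : ∫ z : AddCircle (1:ℝ), Real.log (rho a b z)
      = ∫ x in Ioc (0:ℝ) (0+1), Real.log (rho a b x) :=
    (AddCircle.integral_preimage 1 0 _).symm
  rw [h1]
  have h2 : ∫ x in Ioc (0:ℝ) (0+1), Real.log (rho a b x)
      = ∫ x in Ioc (0:ℝ) 1, (Iic (1/2:ℝ)).indicator
          (fun _ => Real.log a - Real.log b) x + Real.log b := by
    rw [zero_add]
    refine setIntegral_congr_fun measurableSet_Ioc (fun x hx => ?_)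
    rw [rho_coe hx]
    unfold rr
    rw [Set.indicator_apply]
    by_cases h : x ≤ 1/2
    · rw [if_pos h, if_pos (Set.mem_Iic.mpr h)]; ring
    · rw [if_neg h, if_neg (fun hh => h (Set.mem_Iic.mp hh))]; ring
  rw [h2]
  haveI : IsFiniteMeasure (volume.restrict (Ioc (0:ℝ) 1)) := by
    constructor
    rw [Measure.restrict_apply_univ]
    simp [Real.volume_Ioc]
  rw [integral_add ((integrable_const _).indicator measurableSet_Iic) (integrable_const _)]
  rw [setIntegral_indicator measurableSet_Iic]
  have h3 : Ioc (0:ℝ) 1 ∩ Iic (1/2) = Ioc (0:ℝ) (1/2) := by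
    rw [Set.Ioc_inter_Iic]
    norm_num
  rw [h3, setIntegral_const, setIntegral_const]
  simp only [Real.volume_Ioc, smul_eq_mul]
  simp only [Real.volume_real_Ioc, sub_zero, max_eq_left (by norm_num : (0:ℝ) ≤ 1/2),
    max_eq_left (zero_le_one' ℝ)]
  ring

lemma Etil_compl_not_null {a b : ℝ} (ha : 0 < a) (hab' : a ≤ b) (hb : 1 < b)
    (hab : 1 < a * b) (h : volume (Etil a b)ᶜ = 0) : False := by
  have hb0 : (0:ℝ) < b := lt_trans one_pos hb
  set φ : AddCircle (1:ℝ) → ℝ := fun z => Real.log (rho a b z) with hφdef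
  have hφm : Measurable φ := Real.measurable_log.comp (measurable_rho a b)
  have hT : MeasurePreserving Tc (volume : Measure (AddCircle (1:ℝ))) volume :=
    (AddCircle.ergodic_nsmul (T := (1:ℝ)) (n := 2) (by norm_num)).toMeasurePreserving
  have hμuniv : (volume : Measure (AddCircle (1:ℝ))) univ = 1 := by
    rw [AddCircle.measure_univ]; simp
  have hφbd : ∀ z, ‖φ z‖ ≤ max |Real.log a| |Real.log b| := by
    intro z
    rw [hφdef]
    simp only [Real.norm_eq_abs]
    unfold rho rr
    split
    · exact le_max_left _ _
    · exact le_max_right _ _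
  have hφi : Integrable φ := by
    refine (integrable_const (max |Real.log a| |Real.log b|)).mono'
      hφm.aestronglyMeasurable (Eventually.of_forall hφbd)
  have hEφ : ∫ z, φ z = (Real.log a + Real.log b)/2 := integral_log_rho ha hb0
  set S : ℕ → AddCircle (1:ℝ) → ℝ := fun n z => ∑ k ∈ Finset.range n, φ (Tc^[k] z) with hSdef
  have hSm : ∀ n, Measurable (S n) := fun n =>
    Finset.measurable_sum _ (fun k _ => hφm.comp (measurable_Tc.iterate k))
  have hcompi : ∀ k : ℕ, Integrable (fun z => φ (Tc^[k] z)) := by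
    intro k
    exact ((hT.iterate k).integrable_comp hφm.aestronglyMeasurable).mpr hφi
  have hcomp : ∀ k : ℕ, ∫ z, φ (Tc^[k] z) = (Real.log a + Real.log b)/2 := by
    intro k
    have hTk := hT.iterate k
    calc ∫ z, φ (Tc^[k] z) = ∫ y, φ y ∂(Measure.map (Tc^[k]) volume) := by
          rw [integral_map hTk.measurable.aemeasurable
            (by rw [hTk.map_eq]; exact hφm.aestronglyMeasurable)]
      _ = (Real.log a + Real.log b)/2 := by rw [hTk.map_eq, hEφ]
  have hSi : ∀ n, Integrable (S n) := fun n => integrable_finset_sum _ (fun k _ => hcompi k)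
  have hSint : ∀ n : ℕ, ∫ z, S n z = n * ((Real.log a + Real.log b)/2) := by
    intro n
    rw [hSdef]
    rw [integral_finset_sum _ (fun k _ => hcompi k)]
    simp only [hcomp]
    rw [Finset.sum_const, Finset.card_range, nsmul_eq_mul]
  have hφle : ∀ z, φ z ≤ Real.log b := by
    intro z
    rw [hφdef]
    unfold rho rr
    dsimp only
    split
    · exact Real.log_le_log ha hab'
    · exact le_refl _
  have hSle : ∀ n z, S n z / n ≤ Real.log b := by
    intro n z
    rcases Nat.eq_zero_or_pos n with hn | hn
    · subst hn
      simp [hSdef]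
      exact Real.log_nonneg hb.le
    · rw [div_le_iff₀ (by positivity : (0:ℝ) < (n:ℝ))]
      have hs : S n z ≤ (Finset.range n).card • Real.log b :=
        Finset.sum_le_card_nsmul _ _ _ (fun k _ => hφle _)
      rw [Finset.card_range, nsmul_eq_mul] at hs
      linarith
  set g : ℕ → AddCircle (1:ℝ) → ℝ≥0∞ :=
    fun n z => ENNReal.ofReal (Real.log b - S n z / n) with hgdef
  have hgm : ∀ n, Measurable (g n) := fun n =>
    (measurable_const.sub ((hSm n).div_const _)).ennreal_ofReal
  have hglint : ∀ n : ℕ, 1 ≤ n →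
      ∫⁻ z, g n z = ENNReal.ofReal (Real.log b - (Real.log a + Real.log b)/2) := by
    intro n hn
    have hnne : (n:ℝ) ≠ 0 := Nat.cast_ne_zero.mpr (Nat.one_le_iff_ne_zero.mp hn)
    have hint : Integrable (fun z => Real.log b - S n z / n) :=
      (integrable_const _).sub ((hSi n).div_const _)
    rw [hgdef, ← ofReal_integral_eq_lintegral_ofReal hint
      (Eventually.of_forall (fun z => sub_nonneg.mpr (hSle n z)))]
    congr 1
    rw [integral_sub (integrable_const _) ((hSi n).div_const _)]
    rw [integral_div, hSint n, integral_const, measureReal_def, hμuniv, ENNReal.toReal_one, one_smul]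
    field_simp
  have hae : ∀ᵐ z : AddCircle (1:ℝ), z ∈ Etil a b := by
    rw [ae_iff]
    exact h
  have hkey : ∀ z ∈ Etil a b,
      ENNReal.ofReal (Real.log b) ≤ liminf (fun n => g n z) atTop := by
    intro z hz
    have hQpos : ∀ n, 0 < ∏ k ∈ Finset.range n, rho a b (Tc^[k] z) :=
      fun n => Finset.prod_pos (fun k _ => rho_pos ha hb0 _)
    have hSlog : ∀ n, S n z = Real.log (∏ k ∈ Finset.range n, rho a b (Tc^[k] z)) := by
      intro n
      rw [Real.log_prod (fun k _ => (rho_pos ha hb0 _).ne')]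
    have hQt : Tendsto (fun n => ∏ k ∈ Finset.range n, rho a b (Tc^[k] z)) atTop
        (nhdsWithin 0 (Ioi 0)) := by
      refine tendsto_nhdsWithin_of_tendsto_nhds_of_eventually_within _ hz
        (Eventually.of_forall (fun n => hQpos n))
    have hSbot : Tendsto (fun n => S n z) atTop atBot := by
      simp only [hSlog]
      exact Real.tendsto_log_nhdsGT_zero.comp hQt
    have hev : ∀ᶠ n in atTop, ENNReal.ofReal (Real.log b) ≤ g n z := by
      filter_upwards [hSbot.eventually (eventually_le_atBot 0)] with n hn
      refine ENNReal.ofReal_le_ofReal ?_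
      have : S n z / n ≤ 0 := div_nonpos_of_nonpos_of_nonneg hn (Nat.cast_nonneg n)
      linarith
    exact le_liminf_of_le (by isBoundedDefault) hev
  have h1 : ENNReal.ofReal (Real.log b) ≤ ∫⁻ z, liminf (fun n => g n z) atTop := by
    calc ENNReal.ofReal (Real.log b)
        = ∫⁻ _z : AddCircle (1:ℝ), ENNReal.ofReal (Real.log b) := by
          rw [lintegral_const, hμuniv, mul_one]
      _ ≤ ∫⁻ z, liminf (fun n => g n z) atTop :=
          lintegral_mono_ae (hae.mono (fun z hz => hkey z hz))
  have h2 : ∫⁻ z, liminf (fun n => g n z) atTop ≤ liminf (fun n => ∫⁻ z, g n z) atTop :=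
    lintegral_liminf_le hgm
  have h3 : liminf (fun n => ∫⁻ z, g n z) atTop
      = ENNReal.ofReal (Real.log b - (Real.log a + Real.log b)/2) := by
    rw [liminf_congr (eventually_atTop.mpr ⟨1, hglint⟩)]
    exact liminf_const _
  have hfin : ENNReal.ofReal (Real.log b)
      ≤ ENNReal.ofReal (Real.log b - (Real.log a + Real.log b)/2) := by
    rw [← h3]; exact le_trans h1 h2
  have hlogab : 0 < Real.log a + Real.log b := by
    have := Real.log_pos hab
    rwa [Real.log_mul ha.ne' hb0.ne'] at this
  rcases ENNReal.ofReal_le_ofReal_iff'.mp hfin with h4 | h4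
  · linarith
  · linarith [Real.log_pos hb]

lemma Etil_null {a b : ℝ} (ha : 0 < a) (hab' : a ≤ b) (hb : 1 < b)
    (hab : 1 < a * b) : volume (Etil a b) = 0 := by
  have hb0 : (0:ℝ) < b := lt_trans one_pos hb
  have hE : Ergodic Tc (volume : Measure (AddCircle (1:ℝ))) :=
    AddCircle.ergodic_nsmul (T := (1:ℝ)) (n := 2) (by norm_num)
  rcases hE.toPreErgodic.measure_self_or_compl_eq_zero (measurableSet_Etil a b)
    (Tc_preimage_Etil ha hb0) with h | h
  · exact h
  · exact absurd h (fun hh => Etil_compl_not_null ha hab' hb hab hh)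

lemma coe_dbl (t : ℝ) : ((dbl t : ℝ) : AddCircle (1:ℝ)) = Tc ((t : ℝ) : AddCircle (1:ℝ)) := by
  have h2 : Tc ((t : ℝ) : AddCircle (1:ℝ)) = ((2*t : ℝ) : AddCircle (1:ℝ)) := by
    unfold Tc
    rw [← AddCircle.coe_nsmul]
    norm_num
  rw [h2]
  unfold dbl
  split
  · rfl
  · rw [sub_eq_add_neg, AddCircle.coe_add]
    have h3 : ((-1 : ℝ) : AddCircle (1:ℝ)) = 0 := by
      rw [← neg_zero, ← AddCircle.coe_period (p := (1:ℝ))]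
      exact AddCircle.coe_neg ..
    rw [h3, add_zero]

lemma dbl_preimage_countable {s : Set ℝ} (hs : s.Countable) : (dbl ⁻¹' s).Countable := by
  have hsub : dbl ⁻¹' s ⊆ (fun t => t/2) '' s ∪ (fun t => (t+1)/2) '' s := by
    intro x hx
    by_cases h : x ≤ 1/2
    · exact Or.inl ⟨dbl x, hx, by unfold dbl; rw [if_pos h]; ring⟩
    · exact Or.inr ⟨dbl x, hx, by unfold dbl; rw [if_neg h]; ring⟩
  exact Set.Countable.mono hsub ((hs.image _).union (hs.image _))

lemma iter_dbl_countable (k : ℕ) (c : ℝ) : {x : ℝ | dbl^[k] x = c}.Countable := by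
  induction k with
  | zero => simpa using Set.countable_singleton c
  | succ k ih =>
    have h : {x : ℝ | dbl^[k+1] x = c} = dbl ⁻¹' {x : ℝ | dbl^[k] x = c} := by
      ext x; simp [Function.iterate_succ_apply]
    rw [h]; exact dbl_preimage_countable ih

lemma Fsk_fst (β1 β2 : ℝ) (p : ℝ × ℝ) : (Fsk β1 β2 p).1 = dbl p.1 := by
  unfold Fsk; split <;> rfl

lemma Fsk_snd (β1 β2 : ℝ) (p : ℝ × ℝ) :
    (Fsk β1 β2 p).2 = if p.1 ≤ 1/2 then g1 β1 p.2 else g2 β2 p.2 := by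
  unfold Fsk; split <;> simp_all

lemma Fsk_iter_fst (β1 β2 : ℝ) (p : ℝ × ℝ) (n : ℕ) :
    ((Fsk β1 β2)^[n] p).1 = dbl^[n] p.1 := by
  induction n with
  | zero => rfl
  | succ n ih =>
    rw [Function.iterate_succ_apply', Function.iterate_succ_apply', Fsk_fst, ih]

lemma Fsk_iter_snd (β1 β2 : ℝ) (p : ℝ × ℝ) (n : ℕ) :
    ((Fsk β1 β2)^[n+1] p).2 =
      if dbl^[n] p.1 ≤ 1/2 then g1 β1 (((Fsk β1 β2)^[n] p).2)
      else g2 β2 (((Fsk β1 β2)^[n] p).2) := by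
  rw [Function.iterate_succ_apply', Fsk_snd, Fsk_iter_fst]

lemma g1_mem {β y : ℝ} (hβ : β ∈ Set.Ioo (0:ℝ) 1) (hy : y ∈ Set.Ico (0:ℝ) 1) :
    g1 β y ∈ Set.Ico (0:ℝ) 1 := by
  obtain ⟨hβ0, hβ1⟩ := hβ
  obtain ⟨hy0, hy1⟩ := hy
  constructor
  · unfold g1; nlinarith [mul_nonneg hy0 (sub_nonneg.mpr hy1.le)]
  · unfold g1; nlinarith [mul_nonneg (mul_nonneg (sub_nonneg.mpr hy1.le)
      (sub_nonneg.mpr hy1.le)) hy0]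

lemma g2_mem {β y : ℝ} (hβ : β ∈ Set.Ioo (0:ℝ) 1) (hy : y ∈ Set.Ico (0:ℝ) 1) :
    g2 β y ∈ Set.Ico (0:ℝ) 1 := by
  obtain ⟨hβ0, hβ1⟩ := hβ
  obtain ⟨hy0, hy1⟩ := hy
  constructor
  · unfold g2; nlinarith [mul_nonneg hy0 (sub_nonneg.mpr hy1.le), sq_nonneg (1 - y), sq_nonneg y]
  · unfold g2
    have h3 : β*y ≤ y := by nlinarith
    nlinarith [mul_pos (by linarith : (0:ℝ) < 1 - y)
      (by nlinarith [sq_nonneg (y - 1/2)] : (0:ℝ) < 1 + y*y - β*y)]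

lemma dbl_mem {t : ℝ} (ht : t ∈ Set.Ioo (0:ℝ) 1) : dbl t ∈ Set.Ioc (0:ℝ) 1 := by
  obtain ⟨h0, h1⟩ := ht
  unfold dbl
  split <;> constructor <;> linarith

lemma basin_sub {β1 β2 a b δ : ℝ} (hβ1 : β1 ∈ Set.Ioo (0:ℝ) 1) (hβ2 : β2 ∈ Set.Ioo (0:ℝ) 1)
    (hδ : 0 < δ) (hadef : a = β1) (hbdef : b = 2 - β2 - 2*δ) (hbpos : 0 < b)
    {x y : ℝ} (hx : ∀ k, dbl^[k] x ∈ Set.Ioo (0:ℝ) 1) (hy : y ∈ Set.Ico (0:ℝ) 1)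
    (ht : Tendsto (fun n => ((Fsk β1 β2)^[n] (x,y)).2) atTop (nhds 1)) :
    ((x : ℝ) : AddCircle (1:ℝ)) ∈ Etil a b := by
  have hapos : 0 < a := hadef ▸ hβ1.1
  have hrrpos : ∀ t, 0 < rr a b t := by intro t; unfold rr; split <;> assumption
  set Y : ℕ → ℝ := fun n => ((Fsk β1 β2)^[n] (x,y)).2 with hYdef
  have hYmem : ∀ n, Y n ∈ Set.Ico (0:ℝ) 1 := by
    intro n
    induction n with
    | zero => exact hy
    | succ n ih =>
      rw [hYdef]
      simp only
      rw [Fsk_iter_snd]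
      split
      · exact g1_mem hβ1 ih
      · exact g2_mem hβ2 ih
  have hu : Tendsto (fun n => 1 - Y n) atTop (nhds 0) := by
    have h0 : Tendsto (fun _n : ℕ => (1:ℝ)) atTop (nhds 1) := tendsto_const_nhds
    simpa using h0.sub ht
  have hupos : ∀ n, 0 < 1 - Y n := fun n => by linarith [(hYmem n).2]
  obtain ⟨N, hN⟩ : ∃ N, ∀ n ≥ N, 1 - Y n ≤ δ := by
    have := hu.eventually (eventually_le_nhds hδ)
    exact eventually_atTop.mp this
  have step : ∀ n, N ≤ n → rr a b (dbl^[n] x) * (1 - Y n) ≤ 1 - Y (n+1) := by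
    intro n hn
    have hYn := hYmem n
    have hrec : Y (n+1) = if dbl^[n] x ≤ 1/2 then g1 β1 (Y n) else g2 β2 (Y n) := by
      rw [hYdef]; simp only; rw [Fsk_iter_snd]
    rw [hrec]
    unfold rr
    obtain ⟨hy0, hy1⟩ := hYn
    split
    · rw [hadef]
      have key : (1 - g1 β1 (Y n)) - β1*(1 - Y n)
          = (1 - Y n)*((1 - Y n)*(1 + Y n - β1)) := by unfold g1; ring
      have hnn : 0 ≤ (1 - Y n)*((1 - Y n)*(1 + Y n - β1)) := by
        have h1 : (0:ℝ) ≤ 1 - Y n := by linarith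
        have h2 : (0:ℝ) ≤ 1 + Y n - β1 := by linarith [hβ1.2]
        exact mul_nonneg h1 (mul_nonneg h1 h2)
      nlinarith [key, hnn]
    · rw [hbdef]
      have hun : 1 - Y n ≤ δ := hN n hn
      have key : (1 - g2 β2 (Y n)) - (2 - β2 - 2*δ)*(1 - Y n)
          = (1 - Y n)*(2*δ - (1 - Y n)*(1 + Y n - β2)) := by unfold g2; ring
      have h1 : (0:ℝ) ≤ 1 - Y n := by linarith
      have h2 : (0:ℝ) ≤ 1 + Y n - β2 := by linarith [hβ2.2]
      have h3 : (1 - Y n)*(1 + Y n - β2) ≤ δ*2 := by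
        apply mul_le_mul hun (by linarith [hβ2.1]) h2 hδ.le
      have hnn : 0 ≤ (1 - Y n)*(2*δ - (1 - Y n)*(1 + Y n - β2)) := by
        apply mul_nonneg h1; linarith
      nlinarith [key, hnn]
  have prodle : ∀ m, (1 - Y N) * ∏ k ∈ Finset.range m, rr a b (dbl^[N+k] x) ≤ 1 - Y (N+m) := by
    intro m
    induction m with
    | zero => simp
    | succ m ih =>
      rw [Finset.prod_range_succ, ← mul_assoc]
      calc (1 - Y N) * (∏ k ∈ Finset.range m, rr a b (dbl^[N+k] x)) * rr a b (dbl^[N+m] x)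
          ≤ (1 - Y (N+m)) * rr a b (dbl^[N+m] x) :=
            mul_le_mul_of_nonneg_right ih (hrrpos _).le
        _ = rr a b (dbl^[N+m] x) * (1 - Y (N+m)) := by ring
        _ ≤ 1 - Y (N+m+1) := step (N+m) (Nat.le_add_right N m)
  have hPnonneg : ∀ m, (0:ℝ) ≤ ∏ k ∈ Finset.range m, rr a b (dbl^[N+k] x) :=
    fun m => Finset.prod_nonneg (fun k _ => (hrrpos _).le)
  have hshift : Tendsto (fun m => 1 - Y (N + m)) atTop (nhds 0) := by
    have h0 := hu.comp (tendsto_add_atTop_nat N)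
    have h1 : (fun m => 1 - Y (m + N)) = (fun m => 1 - Y (N + m)) := by
      funext m; rw [add_comm]
    rwa [← h1]
  have hPt : Tendsto (fun m => ∏ k ∈ Finset.range m, rr a b (dbl^[N+k] x)) atTop (nhds 0) := by
    have hdiv : Tendsto (fun m => (1 - Y (N+m)) / (1 - Y N)) atTop (nhds 0) := by
      have := hshift.div_const (1 - Y N)
      simpa using this
    refine tendsto_of_tendsto_of_tendsto_of_le_of_le tendsto_const_nhds hdiv hPnonneg ?_
    intro m
    rw [le_div_iff₀ (hupos N)]
    calc (∏ k ∈ Finset.range m, rr a b (dbl^[N+k] x)) * (1 - Y N)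
        = (1 - Y N) * ∏ k ∈ Finset.range m, rr a b (dbl^[N+k] x) := by ring
      _ ≤ 1 - Y (N+m) := prodle m
  have hcoe : ∀ k : ℕ, Tc^[k] ((x : ℝ) : AddCircle (1:ℝ)) = ((dbl^[k] x : ℝ) : AddCircle (1:ℝ)) := by
    intro k
    induction k with
    | zero => rfl
    | succ k ih =>
      rw [Function.iterate_succ_apply', Function.iterate_succ_apply', ih, coe_dbl]
  have hQR : ∀ n, (∏ k ∈ Finset.range n, rho a b (Tc^[k] ((x : ℝ) : AddCircle (1:ℝ))))
      = ∏ k ∈ Finset.range n, rr a b (dbl^[k] x) := by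
    intro n
    refine Finset.prod_congr rfl (fun k _ => ?_)
    rw [hcoe k, rho_coe (Set.Ioo_subset_Ioc_self (hx k))]
  show Tendsto (fun n => ∏ k ∈ Finset.range n, rho a b (Tc^[k] ((x : ℝ) : AddCircle (1:ℝ))))
    atTop (nhds 0)
  simp only [hQR]
  have hmul : Tendsto (fun m => (∏ k ∈ Finset.range N, rr a b (dbl^[k] x))
      * ∏ k ∈ Finset.range m, rr a b (dbl^[N+k] x)) atTop (nhds 0) := by
    have := hPt.const_mul (∏ k ∈ Finset.range N, rr a b (dbl^[k] x))
    simpa using this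
  have hNm : Tendsto (fun m => ∏ k ∈ Finset.range (m + N), rr a b (dbl^[k] x)) atTop (nhds 0) := by
    refine hmul.congr (fun m => ?_)
    rw [← Finset.prod_range_add, add_comm]
  exact (tendsto_add_atTop_iff_nat N).mp hNm

theorem stmt10 (β1 β2 : ℝ) (hβ1 : β1 ∈ Set.Ioo (0:ℝ) 1) (hβ2 : β2 ∈ Set.Ioo (0:ℝ) 1)
    (hb1 : 1/2 < β1) (hb2 : β2 < 2 - 1/β1) :
    volume (basin β1 β2 1) = 0 := by
  obtain ⟨hβ10, hβ11⟩ := hβ1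
  obtain ⟨hβ20, hβ21⟩ := hβ2
  set δ : ℝ := min (1/4) ((2 - β2 - 1/β1)/4) with hδdef
  have hinv : 1 < 1/β1 := by
    rw [lt_div_iff₀ hβ10]; linarith
  have hinvpos : 0 < 1/β1 := by positivity
  have hδpos : 0 < δ := lt_min (by norm_num) (by linarith : (0:ℝ) < (2 - β2 - 1/β1)/4)
  set a : ℝ := β1 with hadef
  set b : ℝ := 2 - β2 - 2*δ with hbdef
  have hδle : δ ≤ (2 - β2 - 1/β1)/4 := min_le_right _ _
  have hbgt : 1/β1 < b := by rw [hbdef]; linarith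
  have hbig : 1 < b := lt_trans hinv hbgt
  have hab' : a ≤ b := by rw [hadef]; linarith
  have hab : 1 < a * b := by
    have h1 : β1 * (1/β1) = 1 := by rw [mul_one_div]; exact div_self hβ10.ne'
    have h2 : β1 * (1/β1) < β1 * b := by
      exact mul_lt_mul_of_pos_left hbgt hβ10
    rw [h1] at h2
    exact h2
  set bad : Set ℝ := ((⋃ k : ℕ, {x : ℝ | dbl^[k] x = 1}) ∪ (⋃ k : ℕ, {x : ℝ | dbl^[k] x = 0}))
      ∪ (((↑) : ℝ → AddCircle (1:ℝ)) ⁻¹' (Etil a b) ∩ Ioc 0 1) with hbaddef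
  have hbadnull : volume bad = 0 := by
    apply measure_union_null
    · apply measure_union_null
      · exact (Set.countable_iUnion (fun k => iter_dbl_countable k 1)).measure_zero _
      · exact (Set.countable_iUnion (fun k => iter_dbl_countable k 0)).measure_zero _
    · have hE0 : volume (Etil a b) = 0 := Etil_null hβ10 hab' hbig hab
      have hmp := (AddCircle.measurePreserving_mk 1 0).measure_preimage
        (measurableSet_Etil a b).nullMeasurableSet
      rw [hE0] at hmp
      rw [Measure.restrict_apply (AddCircle.measurable_mk' (measurableSet_Etil a b))] at hmp
      simpa using hmp
  have hsub : basin β1 β2 1 ⊆ (univ ×ˢ {(1:ℝ)}) ∪ (bad ×ˢ univ) := by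
    rintro ⟨x, y⟩ ⟨hmem, ht⟩
    obtain ⟨hx01, hy01⟩ : x ∈ Icc (0:ℝ) 1 ∧ y ∈ Icc (0:ℝ) 1 := hmem
    by_cases hy1 : y = 1
    · exact Or.inl ⟨mem_univ _, by simpa using hy1⟩
    · refine Or.inr ⟨?_, mem_univ _⟩
      by_cases hhit : (∃ k : ℕ, dbl^[k] x = 1) ∨ (∃ k : ℕ, dbl^[k] x = 0)
      · refine Or.inl ?_
        rcases hhit with ⟨k, hk⟩ | ⟨k, hk⟩
        · exact Or.inl (mem_iUnion.mpr ⟨k, hk⟩)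
        · exact Or.inr (mem_iUnion.mpr ⟨k, hk⟩)
      · push_neg at hhit
        obtain ⟨hh1, hh0⟩ := hhit
        have hxk : ∀ k, dbl^[k] x ∈ Ioo (0:ℝ) 1 := by
          intro k
          induction k with
          | zero =>
            exact ⟨lt_of_le_of_ne hx01.1 (Ne.symm (by simpa using hh0 0)),
              lt_of_le_of_ne hx01.2 (by simpa using hh1 0)⟩
          | succ k ih =>
            have hd := dbl_mem ih
            have hne : dbl (dbl^[k] x) ≠ 1 := by
              have := hh1 (k+1)
              rwa [Function.iterate_succ_apply'] at this
            rw [Function.iterate_succ_apply']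
            exact ⟨hd.1, lt_of_le_of_ne hd.2 hne⟩
        refine Or.inr ⟨?_, Set.Ioo_subset_Ioc_self (hxk 0)⟩
        exact basin_sub ⟨hβ10, hβ11⟩ ⟨hβ20, hβ21⟩ hδpos hadef hbdef (by linarith) hxk
          ⟨hy01.1, lt_of_le_of_ne hy01.2 hy1⟩ ht
  apply measure_mono_null hsub
  apply measure_union_null
  · rw [Measure.volume_eq_prod, Measure.prod_prod, Real.volume_singleton, mul_zero]
  · rw [Measure.volume_eq_prod, Measure.prod_prod, hbadnull, zero_mul]

end
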